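/- arXiv:1407.4418 — 4 statements merged into one kernel-verified Lean document; each statement's English description precedes it below -/
import Mathlib

section
/- Let H be a separable Hilbert space and let K be a bounded positive semidefinite operator on H ⊕ H written in block form [[A, B], [B*, D]]. If the diagonal blocks A and D are Hilbert–Schmidt operators, then the off-diagonal block B is also Hilbert–Schmidt. -/
set_option maxHeartbeats 1000000
open scoped RealInnerProductSpace
open Matrix

private lemma frob_trace {m n : Type*} [Fintype m] [Fintype n] (Z : Matrix m n ℝ) :
    (Zᵀ * Z).trace = ∑ i, ∑ j, Z i j ^ 2 := by
  simp only [Matrix.trace, Matrix.diag, Matrix.mul_apply, Matrix.transpose_apply, sq]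
  exact Finset.sum_comm

private lemma trace_mul_double {m : Type*} [Fintype m] (P Q : Matrix m m ℝ) :
    (P * Q).trace = ∑ k, ∑ l, P k l * Q l k := by
  simp [Matrix.trace, Matrix.diag, Matrix.mul_apply]

private lemma block_cs {n : Type*} [Fintype n] {M : Matrix (n ⊕ n) (n ⊕ n) ℝ}
    (hM : M.PosSemidef) :
    (∑ i, ∑ j, M (Sum.inl i) (Sum.inr j) ^ 2) ^ 2 ≤
      (∑ i, ∑ j, M (Sum.inl i) (Sum.inl j) ^ 2) *
        (∑ i, ∑ j, M (Sum.inr i) (Sum.inr j) ^ 2) := by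
  classical
  obtain ⟨N, rfl⟩ : ∃ N : Matrix (n ⊕ n) (n ⊕ n) ℝ, M = Nᴴ * N := by
    open scoped MatrixOrder Matrix.Norms.L2Operator in
    obtain ⟨N, hN⟩ := CStarAlgebra.nonneg_iff_eq_star_mul_self.mp hM.nonneg
    exact ⟨N, hN⟩
  set X := N.submatrix id Sum.inl with hX
  set Y := N.submatrix id Sum.inr with hY
  set P := X * Xᵀ with hP
  set Q := Y * Yᵀ with hQ
  have hPs : ∀ k l, P k l = P l k := by
    intro k l; simp [hP, Matrix.mul_apply, Matrix.transpose_apply, mul_comm]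
  have hQs : ∀ k l, Q k l = Q l k := by
    intro k l; simp [hQ, Matrix.mul_apply, Matrix.transpose_apply, mul_comm]
  have hBentry : ∀ i j, (Nᴴ * N) (Sum.inl i) (Sum.inr j) = (Xᵀ * Y) i j := by
    intro i j
    simp [Matrix.mul_apply, Matrix.conjTranspose_apply, hX, hY]
  have hAentry : ∀ i j, (Nᴴ * N) (Sum.inl i) (Sum.inl j) = (Xᵀ * X) i j := by
    intro i j
    simp [Matrix.mul_apply, Matrix.conjTranspose_apply, hX]
  have hDentry : ∀ i j, (Nᴴ * N) (Sum.inr i) (Sum.inr j) = (Yᵀ * Y) i j := by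
    intro i j
    simp [Matrix.mul_apply, Matrix.conjTranspose_apply, hY]
  have tB : ∑ i, ∑ j, (Nᴴ * N) (Sum.inl i) (Sum.inr j) ^ 2 = (P * Q).trace := by
    simp_rw [hBentry]
    rw [← frob_trace (Xᵀ * Y)]
    rw [Matrix.transpose_mul, Matrix.transpose_transpose]
    calc (Yᵀ * X * (Xᵀ * Y)).trace
        = (Yᵀ * (X * Xᵀ) * Y).trace := by rw [Matrix.mul_assoc, Matrix.mul_assoc, Matrix.mul_assoc]
      _ = (Y * (Yᵀ * (X * Xᵀ))).trace := by rw [Matrix.trace_mul_comm]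
      _ = (P * Q).trace := by rw [← Matrix.mul_assoc, Matrix.trace_mul_comm]
  have tA : ∑ i, ∑ j, (Nᴴ * N) (Sum.inl i) (Sum.inl j) ^ 2 = (P * P).trace := by
    simp_rw [hAentry]
    rw [← frob_trace (Xᵀ * X)]
    rw [Matrix.transpose_mul, Matrix.transpose_transpose]
    calc (Xᵀ * X * (Xᵀ * X)).trace
        = (Xᵀ * (X * Xᵀ) * X).trace := by rw [Matrix.mul_assoc, Matrix.mul_assoc, Matrix.mul_assoc]
      _ = (X * (Xᵀ * (X * Xᵀ))).trace := by rw [Matrix.trace_mul_comm]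
      _ = (P * P).trace := by rw [← Matrix.mul_assoc, Matrix.trace_mul_comm]
  have tD : ∑ i, ∑ j, (Nᴴ * N) (Sum.inr i) (Sum.inr j) ^ 2 = (Q * Q).trace := by
    simp_rw [hDentry]
    rw [← frob_trace (Yᵀ * Y)]
    rw [Matrix.transpose_mul, Matrix.transpose_transpose]
    calc (Yᵀ * Y * (Yᵀ * Y)).trace
        = (Yᵀ * (Y * Yᵀ) * Y).trace := by rw [Matrix.mul_assoc, Matrix.mul_assoc, Matrix.mul_assoc]
      _ = (Y * (Yᵀ * (Y * Yᵀ))).trace := by rw [Matrix.trace_mul_comm]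
      _ = (Q * Q).trace := by rw [← Matrix.mul_assoc, Matrix.trace_mul_comm]
  rw [tA, tB, tD, trace_mul_double, trace_mul_double, trace_mul_double]
  have e1 : ∑ k, ∑ l, P k l * Q l k = ∑ p : (n ⊕ n) × (n ⊕ n), P p.1 p.2 * Q p.1 p.2 := by
    rw [Fintype.sum_prod_type]
    exact Finset.sum_congr rfl fun k _ => Finset.sum_congr rfl fun l _ => by rw [hQs]
  have e2 : ∑ k, ∑ l, P k l * P l k = ∑ p : (n ⊕ n) × (n ⊕ n), P p.1 p.2 ^ 2 := by
    rw [Fintype.sum_prod_type]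
    exact Finset.sum_congr rfl fun k _ => Finset.sum_congr rfl fun l _ => by rw [hPs]; ring
  have e3 : ∑ k, ∑ l, Q k l * Q l k = ∑ p : (n ⊕ n) × (n ⊕ n), Q p.1 p.2 ^ 2 := by
    rw [Fintype.sum_prod_type]
    exact Finset.sum_congr rfl fun k _ => Finset.sum_congr rfl fun l _ => by rw [hQs]; ring
  rw [e1, e2, e3]
  exact Finset.sum_mul_sq_le_sq_mul_sq _ _ _

/-- A bounded positive block operator [[A,B],[B*,D]] on H ⊕ H with Hilbert–Schmidt
diagonal blocks has Hilbert–Schmidt off-diagonal block. Positivity is expressed as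
⟨T(x,y),(x,y)⟩ = ⟪Ax,x⟫ + ⟪By,x⟫ + ⟪x,By⟫ + ⟪Dy,y⟫ ≥ 0 (using C = B*). -/

theorem stmt_0 {H : Type*} [NormedAddCommGroup H] [InnerProductSpace ℝ H]
    {ι : Type*} (b : HilbertBasis ι ℝ H)
    (A B D : H →L[ℝ] H)
    (hpos : ∀ x y : H, 0 ≤ ⟪A x, x⟫ + ⟪B y, x⟫ + ⟪x, B y⟫ + ⟪D y, y⟫)
    (hA : Summable fun i => ‖A (b i)‖ ^ 2)
    (hD : Summable fun i => ‖D (b i)‖ ^ 2) :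
    Summable fun i => ‖B (b i)‖ ^ 2 := by
  classical
  -- Parseval facts
  have hsum : ∀ v : H, Summable fun j => ⟪b j, v⟫ ^ 2 := by
    intro v
    refine (b.summable_inner_mul_inner v v).congr fun j => ?_
    rw [real_inner_comm v (b j)]; ring
  have hpar : ∀ v : H, ∑' j, ⟪b j, v⟫ ^ 2 = ‖v‖ ^ 2 := by
    intro v
    have h := b.tsum_inner_mul_inner v v
    rw [real_inner_self_eq_norm_sq] at h
    rw [← h]
    exact tsum_congr fun j => by rw [real_inner_comm v (b j)]; ring
  have bessel : ∀ (v : H) (w : Finset ι), ∑ j ∈ w, ⟪b j, v⟫ ^ 2 ≤ ‖v‖ ^ 2 := fun v w => by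
    rw [← hpar v]; exact Summable.sum_le_tsum w (fun j _ => sq_nonneg _) (hsum v)
  set SA := ∑' i, ‖A (b i)‖ ^ 2 with hSAdef
  set SD := ∑' i, ‖D (b i)‖ ^ 2 with hSDdef
  have hSA0 : 0 ≤ SA := tsum_nonneg fun i => sq_nonneg _
  have hSD0 : 0 ≤ SD := tsum_nonneg fun i => sq_nonneg _
  set C := Real.sqrt (SA * SD) with hCdef
  -- key finite bound
  have key : ∀ u : Finset ι, ∑ i ∈ u, ∑ j ∈ u, ⟪B (b j), b i⟫ ^ 2 ≤ C := by
    intro u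
    set G : Matrix (↥u ⊕ ↥u) (↥u ⊕ ↥u) ℝ := fun p q =>
      Sum.elim
        (fun i : ↥u => Sum.elim
          (fun j : ↥u => (⟪A (b ↑i), b ↑j⟫ + ⟪A (b ↑j), b ↑i⟫) / 2)
          (fun j : ↥u => ⟪B (b ↑j), b ↑i⟫) q)
        (fun i : ↥u => Sum.elim
          (fun j : ↥u => ⟪B (b ↑i), b ↑j⟫)
          (fun j : ↥u => (⟪D (b ↑i), b ↑j⟫ + ⟪D (b ↑j), b ↑i⟫) / 2) q)
        p with hG
    have expand : ∀ (T : H →L[ℝ] H) (cc dd : ↥u → ℝ),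
        ⟪T (∑ i : ↥u, cc i • (b ↑i : H)), ∑ j : ↥u, dd j • (b ↑j : H)⟫
          = ∑ i : ↥u, ∑ j : ↥u, cc i * dd j * ⟪T (b ↑i), b ↑j⟫ := by
      intro T cc dd
      rw [map_sum, sum_inner]
      refine Finset.sum_congr rfl fun i _ => ?_
      rw [inner_sum]
      refine Finset.sum_congr rfl fun j _ => ?_
      rw [T.map_smul, real_inner_smul_left, real_inner_smul_right]
      ring
    have hGpsd : G.PosSemidef := by
      refine Matrix.PosSemidef.of_dotProduct_mulVec_nonneg ?_ ?_
      · ext p q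
        rw [Matrix.conjTranspose_apply, star_trivial]
        cases p <;> cases q <;>
          simp [hG, Matrix.conjTranspose_apply, add_comm, real_inner_comm]
      · intro c
        have hx := hpos (∑ i : ↥u, c (Sum.inl i) • (b ↑i : H))
          (∑ i : ↥u, c (Sum.inr i) • (b ↑i : H))
        have hdot : star c ⬝ᵥ G *ᵥ c =
            (∑ i : ↥u, ∑ j : ↥u, c (Sum.inl i) * (G (Sum.inl i) (Sum.inl j) * c (Sum.inl j)))
            + (∑ i : ↥u, ∑ j : ↥u, c (Sum.inl i) * (G (Sum.inl i) (Sum.inr j) * c (Sum.inr j)))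
            + ((∑ i : ↥u, ∑ j : ↥u, c (Sum.inr i) * (G (Sum.inr i) (Sum.inl j) * c (Sum.inl j)))
            + (∑ i : ↥u, ∑ j : ↥u, c (Sum.inr i) * (G (Sum.inr i) (Sum.inr j) * c (Sum.inr j)))) := by
          simp only [dotProduct, Matrix.mulVec, Pi.star_apply, star_trivial,
            Fintype.sum_sum_type, Finset.mul_sum, Finset.sum_add_distrib, mul_add]
          ring
        have hT1 : (∑ i : ↥u, ∑ j : ↥u, c (Sum.inl i) * (G (Sum.inl i) (Sum.inl j) * c (Sum.inl j)))
            = ⟪A (∑ i : ↥u, c (Sum.inl i) • (b ↑i : H)), ∑ i : ↥u, c (Sum.inl i) • (b ↑i : H)⟫ := by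
          rw [expand A]
          have hsw : ∑ i : ↥u, ∑ j : ↥u, c (Sum.inl i) * c (Sum.inl j) * ⟪A (b ↑j), b ↑i⟫
              = ∑ i : ↥u, ∑ j : ↥u, c (Sum.inl i) * c (Sum.inl j) * ⟪A (b ↑i), b ↑j⟫ := by
            refine Eq.trans Finset.sum_comm ?_
            exact Finset.sum_congr rfl fun i _ => Finset.sum_congr rfl fun j _ => by ring
          calc ∑ i : ↥u, ∑ j : ↥u, c (Sum.inl i) * (G (Sum.inl i) (Sum.inl j) * c (Sum.inl j))
              = ∑ i : ↥u, ∑ j : ↥u, (c (Sum.inl i) * c (Sum.inl j) * ⟪A (b ↑i), b ↑j⟫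
                  + c (Sum.inl i) * c (Sum.inl j) * ⟪A (b ↑j), b ↑i⟫) / 2 := by
                refine Finset.sum_congr rfl fun i _ => Finset.sum_congr rfl fun j _ => ?_
                simp only [hG, Sum.elim_inl]
                ring
            _ = (∑ i : ↥u, ∑ j : ↥u, c (Sum.inl i) * c (Sum.inl j) * ⟪A (b ↑i), b ↑j⟫) / 2
                + (∑ i : ↥u, ∑ j : ↥u, c (Sum.inl i) * c (Sum.inl j) * ⟪A (b ↑j), b ↑i⟫) / 2 := by
                simp only [add_div, Finset.sum_add_distrib, Finset.sum_div]
            _ = ∑ i : ↥u, ∑ j : ↥u, c (Sum.inl i) * c (Sum.inl j) * ⟪A (b ↑i), b ↑j⟫ := by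
                rw [hsw]; ring
        have hT4 : (∑ i : ↥u, ∑ j : ↥u, c (Sum.inr i) * (G (Sum.inr i) (Sum.inr j) * c (Sum.inr j)))
            = ⟪D (∑ i : ↥u, c (Sum.inr i) • (b ↑i : H)), ∑ i : ↥u, c (Sum.inr i) • (b ↑i : H)⟫ := by
          rw [expand D]
          have hsw : ∑ i : ↥u, ∑ j : ↥u, c (Sum.inr i) * c (Sum.inr j) * ⟪D (b ↑j), b ↑i⟫
              = ∑ i : ↥u, ∑ j : ↥u, c (Sum.inr i) * c (Sum.inr j) * ⟪D (b ↑i), b ↑j⟫ := by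
            refine Eq.trans Finset.sum_comm ?_
            exact Finset.sum_congr rfl fun i _ => Finset.sum_congr rfl fun j _ => by ring
          calc ∑ i : ↥u, ∑ j : ↥u, c (Sum.inr i) * (G (Sum.inr i) (Sum.inr j) * c (Sum.inr j))
              = ∑ i : ↥u, ∑ j : ↥u, (c (Sum.inr i) * c (Sum.inr j) * ⟪D (b ↑i), b ↑j⟫
                  + c (Sum.inr i) * c (Sum.inr j) * ⟪D (b ↑j), b ↑i⟫) / 2 := by
                refine Finset.sum_congr rfl fun i _ => Finset.sum_congr rfl fun j _ => ?_
                simp only [hG, Sum.elim_inr]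
                ring
            _ = (∑ i : ↥u, ∑ j : ↥u, c (Sum.inr i) * c (Sum.inr j) * ⟪D (b ↑i), b ↑j⟫) / 2
                + (∑ i : ↥u, ∑ j : ↥u, c (Sum.inr i) * c (Sum.inr j) * ⟪D (b ↑j), b ↑i⟫) / 2 := by
                simp only [add_div, Finset.sum_add_distrib, Finset.sum_div]
            _ = ∑ i : ↥u, ∑ j : ↥u, c (Sum.inr i) * c (Sum.inr j) * ⟪D (b ↑i), b ↑j⟫ := by
                rw [hsw]; ring
        have hT3 : (∑ i : ↥u, ∑ j : ↥u, c (Sum.inr i) * (G (Sum.inr i) (Sum.inl j) * c (Sum.inl j)))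
            = ⟪B (∑ i : ↥u, c (Sum.inr i) • (b ↑i : H)), ∑ i : ↥u, c (Sum.inl i) • (b ↑i : H)⟫ := by
          rw [expand B]
          refine Finset.sum_congr rfl fun i _ => Finset.sum_congr rfl fun j _ => ?_
          simp only [hG, Sum.elim_inl, Sum.elim_inr]
          ring
        have hT2 : (∑ i : ↥u, ∑ j : ↥u, c (Sum.inl i) * (G (Sum.inl i) (Sum.inr j) * c (Sum.inr j)))
            = ⟪B (∑ i : ↥u, c (Sum.inr i) • (b ↑i : H)), ∑ i : ↥u, c (Sum.inl i) • (b ↑i : H)⟫ := by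
          rw [expand B]
          refine Eq.trans Finset.sum_comm ?_
          refine Finset.sum_congr rfl fun i _ => Finset.sum_congr rfl fun j _ => ?_
          simp only [hG, Sum.elim_inl, Sum.elim_inr]
          ring
        have hcomm : ⟪(∑ i : ↥u, c (Sum.inl i) • (b ↑i : H)),
            B (∑ i : ↥u, c (Sum.inr i) • (b ↑i : H))⟫
            = ⟪B (∑ i : ↥u, c (Sum.inr i) • (b ↑i : H)), ∑ i : ↥u, c (Sum.inl i) • (b ↑i : H)⟫ :=
          real_inner_comm _ _
        rw [hdot, hT1, hT2, hT3, hT4]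
        rw [hcomm] at hx
        linarith
    have hmain := block_cs hGpsd
    have eB : ∑ i : ↥u, ∑ j : ↥u, G (Sum.inl i) (Sum.inr j) ^ 2
        = ∑ i ∈ u, ∑ j ∈ u, ⟪B (b j), b i⟫ ^ 2 := by
      simp only [hG, Sum.elim_inl, Sum.elim_inr]
      calc ∑ i : ↥u, ∑ j : ↥u, ⟪B (b ↑j), b ↑i⟫ ^ 2
          = ∑ i : ↥u, ∑ j ∈ u, ⟪B (b j), b ↑i⟫ ^ 2 :=
            Finset.sum_congr rfl fun i _ =>
              Finset.sum_coe_sort u (fun j => ⟪B (b j), b ↑i⟫ ^ 2)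
        _ = ∑ i ∈ u, ∑ j ∈ u, ⟪B (b j), b i⟫ ^ 2 :=
            Finset.sum_coe_sort u (fun i => ∑ j ∈ u, ⟪B (b j), b i⟫ ^ 2)
    have bA : ∑ i : ↥u, ∑ j : ↥u, G (Sum.inl i) (Sum.inl j) ^ 2 ≤ SA := by
      have step1 : ∀ i j : ↥u, G (Sum.inl i) (Sum.inl j) ^ 2
          ≤ (⟪A (b ↑i), b ↑j⟫ ^ 2 + ⟪A (b ↑j), b ↑i⟫ ^ 2) / 2 := by
        intro i j
        simp only [hG, Sum.elim_inl]
        nlinarith [sq_nonneg (⟪A (b ↑i), b ↑j⟫ - ⟪A (b ↑j), b ↑i⟫)]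
      have hsw : ∑ i : ↥u, ∑ j : ↥u, ⟪A (b ↑j), b ↑i⟫ ^ 2
          = ∑ i : ↥u, ∑ j : ↥u, ⟪A (b ↑i), b ↑j⟫ ^ 2 := Finset.sum_comm
      calc ∑ i : ↥u, ∑ j : ↥u, G (Sum.inl i) (Sum.inl j) ^ 2
          ≤ ∑ i : ↥u, ∑ j : ↥u, (⟪A (b ↑i), b ↑j⟫ ^ 2 + ⟪A (b ↑j), b ↑i⟫ ^ 2) / 2 :=
            Finset.sum_le_sum fun i _ => Finset.sum_le_sum fun j _ => step1 i j
        _ = (∑ i : ↥u, ∑ j : ↥u, ⟪A (b ↑i), b ↑j⟫ ^ 2) / 2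
            + (∑ i : ↥u, ∑ j : ↥u, ⟪A (b ↑j), b ↑i⟫ ^ 2) / 2 := by
            simp only [add_div, Finset.sum_add_distrib, Finset.sum_div]
        _ = ∑ i : ↥u, ∑ j : ↥u, ⟪A (b ↑i), b ↑j⟫ ^ 2 := by rw [hsw]; ring
        _ = ∑ i ∈ u, ∑ j ∈ u, ⟪A (b i), b j⟫ ^ 2 := by
            calc ∑ i : ↥u, ∑ j : ↥u, ⟪A (b ↑i), b ↑j⟫ ^ 2
                = ∑ i : ↥u, ∑ j ∈ u, ⟪A (b ↑i), b j⟫ ^ 2 :=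
                  Finset.sum_congr rfl fun i _ =>
                    Finset.sum_coe_sort u (fun j => ⟪A (b ↑i), b j⟫ ^ 2)
              _ = ∑ i ∈ u, ∑ j ∈ u, ⟪A (b i), b j⟫ ^ 2 :=
                  Finset.sum_coe_sort u (fun i => ∑ j ∈ u, ⟪A (b i), b j⟫ ^ 2)
        _ ≤ ∑ i ∈ u, ‖A (b i)‖ ^ 2 := by
            refine Finset.sum_le_sum fun i _ => ?_
            calc ∑ j ∈ u, ⟪A (b i), b j⟫ ^ 2
                = ∑ j ∈ u, ⟪b j, A (b i)⟫ ^ 2 :=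
                  Finset.sum_congr rfl fun j _ => by rw [real_inner_comm]
              _ ≤ ‖A (b i)‖ ^ 2 := bessel _ u
        _ ≤ SA := Summable.sum_le_tsum u (fun i _ => sq_nonneg _) hA
    have bD : ∑ i : ↥u, ∑ j : ↥u, G (Sum.inr i) (Sum.inr j) ^ 2 ≤ SD := by
      have step1 : ∀ i j : ↥u, G (Sum.inr i) (Sum.inr j) ^ 2
          ≤ (⟪D (b ↑i), b ↑j⟫ ^ 2 + ⟪D (b ↑j), b ↑i⟫ ^ 2) / 2 := by
        intro i j
        simp only [hG, Sum.elim_inr]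
        nlinarith [sq_nonneg (⟪D (b ↑i), b ↑j⟫ - ⟪D (b ↑j), b ↑i⟫)]
      have hsw : ∑ i : ↥u, ∑ j : ↥u, ⟪D (b ↑j), b ↑i⟫ ^ 2
          = ∑ i : ↥u, ∑ j : ↥u, ⟪D (b ↑i), b ↑j⟫ ^ 2 := Finset.sum_comm
      calc ∑ i : ↥u, ∑ j : ↥u, G (Sum.inr i) (Sum.inr j) ^ 2
          ≤ ∑ i : ↥u, ∑ j : ↥u, (⟪D (b ↑i), b ↑j⟫ ^ 2 + ⟪D (b ↑j), b ↑i⟫ ^ 2) / 2 :=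
            Finset.sum_le_sum fun i _ => Finset.sum_le_sum fun j _ => step1 i j
        _ = (∑ i : ↥u, ∑ j : ↥u, ⟪D (b ↑i), b ↑j⟫ ^ 2) / 2
            + (∑ i : ↥u, ∑ j : ↥u, ⟪D (b ↑j), b ↑i⟫ ^ 2) / 2 := by
            simp only [add_div, Finset.sum_add_distrib, Finset.sum_div]
        _ = ∑ i : ↥u, ∑ j : ↥u, ⟪D (b ↑i), b ↑j⟫ ^ 2 := by rw [hsw]; ring
        _ = ∑ i ∈ u, ∑ j ∈ u, ⟪D (b i), b j⟫ ^ 2 := by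
            calc ∑ i : ↥u, ∑ j : ↥u, ⟪D (b ↑i), b ↑j⟫ ^ 2
                = ∑ i : ↥u, ∑ j ∈ u, ⟪D (b ↑i), b j⟫ ^ 2 :=
                  Finset.sum_congr rfl fun i _ =>
                    Finset.sum_coe_sort u (fun j => ⟪D (b ↑i), b j⟫ ^ 2)
              _ = ∑ i ∈ u, ∑ j ∈ u, ⟪D (b i), b j⟫ ^ 2 :=
                  Finset.sum_coe_sort u (fun i => ∑ j ∈ u, ⟪D (b i), b j⟫ ^ 2)
        _ ≤ ∑ i ∈ u, ‖D (b i)‖ ^ 2 := by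
            refine Finset.sum_le_sum fun i _ => ?_
            calc ∑ j ∈ u, ⟪D (b i), b j⟫ ^ 2
                = ∑ j ∈ u, ⟪b j, D (b i)⟫ ^ 2 :=
                  Finset.sum_congr rfl fun j _ => by rw [real_inner_comm]
              _ ≤ ‖D (b i)‖ ^ 2 := bessel _ u
        _ ≤ SD := Summable.sum_le_tsum u (fun i _ => sq_nonneg _) hD
    have hS0 : 0 ≤ ∑ i ∈ u, ∑ j ∈ u, ⟪B (b j), b i⟫ ^ 2 :=
      Finset.sum_nonneg fun i _ => Finset.sum_nonneg fun j _ => sq_nonneg _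
    have hApos : 0 ≤ ∑ i : ↥u, ∑ j : ↥u, G (Sum.inr i) (Sum.inr j) ^ 2 :=
      Finset.sum_nonneg fun i _ => Finset.sum_nonneg fun j _ => sq_nonneg _
    have hsq : (∑ i ∈ u, ∑ j ∈ u, ⟪B (b j), b i⟫ ^ 2) ^ 2 ≤ SA * SD := by
      rw [← eB]
      exact le_trans hmain (mul_le_mul bA bD hApos hSA0)
    rw [hCdef]
    exact (Real.le_sqrt hS0 (mul_nonneg hSA0 hSD0)).mpr hsq
  -- conclude
  have keyfull : ∀ u v : Finset ι, ∑ j ∈ v, ∑ i ∈ u, ⟪b j, B (b i)⟫ ^ 2 ≤ C := by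
    intro u v
    calc ∑ j ∈ v, ∑ i ∈ u, ⟪b j, B (b i)⟫ ^ 2
        ≤ ∑ j ∈ v, ∑ i ∈ u ∪ v, ⟪b j, B (b i)⟫ ^ 2 := by
          refine Finset.sum_le_sum fun j _ => ?_
          exact Finset.sum_le_sum_of_subset_of_nonneg Finset.subset_union_left
            fun i _ _ => sq_nonneg _
      _ ≤ ∑ j ∈ u ∪ v, ∑ i ∈ u ∪ v, ⟪b j, B (b i)⟫ ^ 2 :=
          Finset.sum_le_sum_of_subset_of_nonneg Finset.subset_union_right
            fun j _ _ => Finset.sum_nonneg fun i _ => sq_nonneg _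
      _ = ∑ i ∈ u ∪ v, ∑ j ∈ u ∪ v, ⟪B (b j), b i⟫ ^ 2 := by
          refine Finset.sum_congr rfl fun j _ => Finset.sum_congr rfl fun i _ => ?_
          rw [real_inner_comm]
      _ ≤ C := key (u ∪ v)
  have final : ∀ u : Finset ι, ∑ i ∈ u, ‖B (b i)‖ ^ 2 ≤ C := by
    intro u
    calc ∑ i ∈ u, ‖B (b i)‖ ^ 2
        = ∑ i ∈ u, ∑' j, ⟪b j, B (b i)⟫ ^ 2 :=
          Finset.sum_congr rfl fun i _ => (hpar _).symm
      _ = ∑' j, ∑ i ∈ u, ⟪b j, B (b i)⟫ ^ 2 := (Summable.tsum_finsetSum fun i _ => hsum _).symm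
      _ ≤ C := Summable.tsum_le_of_sum_le (summable_sum fun i _ => hsum _) fun v => keyfull u v
  exact summable_of_sum_le (fun i => sq_nonneg _) final
end

section
/- Let (Ω, P) be a probability space, G a sub-σ-algebra, and M a nonnegative integrable random variable. Let G(x) = x/(1+x). If E[M · G(E[M | G])] = E[M · G(M)] (i.e., equality holds in the Jensen-type chain combining the strict convexity of x ↦ x·G(x) and strict concavity of G), then M is almost surely equal to E[M | G], i.e., M is G-measurable (up to a null set). -/
open MeasureTheory

/-- Pointwise algebraic identity: the "Bregman gap" of φ(x) = x²/(1+x). -/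
lemma gap_eq (a b : ℝ) (ha : 0 ≤ a) (hb : 0 ≤ b) :
    (a - b)^2 / ((1 + a) * (1 + b)^2)
      = a * (a / (1 + a)) - b * (b / (1 + b))
        - (1 - 1/(1+b)^2) * a + (1 - 1/(1+b)^2) * b := by
  have h1 : (1 : ℝ) + a ≠ 0 := by positivity
  have h2 : (1 : ℝ) + b ≠ 0 := by positivity
  field_simp
  ring

/-- If equality holds in the Jensen-type chain for G(x) = x/(1+x), then the nonnegative
integrable random variable M equals its conditional expectation a.s. -/
theorem stmt_1 {Ω : Type*} {mΩ : MeasurableSpace Ω} (P : Measure Ω)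
    [IsProbabilityMeasure P]
    (m : MeasurableSpace Ω) (hm : m ≤ mΩ)
    (M : Ω → ℝ) (hMint : Integrable M P) (hM0 : 0 ≤ᵐ[P] M)
    (heq : ∫ ω, M ω * ((P[M|m]) ω / (1 + (P[M|m]) ω)) ∂P
         = ∫ ω, M ω * (M ω / (1 + M ω)) ∂P) :
    M =ᵐ[P] P[M|m] := by
  set N : Ω → ℝ := P[M|m] with hNdef
  have hNsm : StronglyMeasurable[m] N := stronglyMeasurable_condExp
  have hNasm : AEStronglyMeasurable[mΩ] N P := (hNsm.mono hm).aestronglyMeasurable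
  have hNint : Integrable N P := integrable_condExp
  have hN0 : 0 ≤ᵐ[P] N := condExp_nonneg hM0
  have hM0' : ∀ᵐ ω ∂P, 0 ≤ M ω := hM0.mono fun ω h => by simpa using h
  have hN0' : ∀ᵐ ω ∂P, 0 ≤ N ω := hN0.mono fun ω h => by simpa using h
  have hMasm : AEStronglyMeasurable[mΩ] M P := hMint.aestronglyMeasurable
  have hMm : AEMeasurable M P := hMasm.aemeasurable
  have hNm : AEMeasurable N P := hNasm.aemeasurable
  -- the two m-measurable multipliers
  set f₁ : Ω → ℝ := fun ω => N ω / (1 + N ω) with hf₁def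
  set f₂ : Ω → ℝ := fun ω => 1 - 1/(1 + N ω)^2 with hf₂def
  have hgmeas : Measurable fun x : ℝ => x / (1 + x) :=
    measurable_id.div (measurable_const.add measurable_id)
  have hdmeas : Measurable fun x : ℝ => 1 - 1/(1+x)^2 :=
    measurable_const.sub (measurable_const.div
      ((measurable_const.add measurable_id).pow_const 2))
  have hf₁sm : StronglyMeasurable[m] f₁ :=
    (hgmeas.comp hNsm.measurable).stronglyMeasurable
  have hf₂sm : StronglyMeasurable[m] f₂ :=
    (hdmeas.comp hNsm.measurable).stronglyMeasurable
  have hf₁asm : AEStronglyMeasurable[mΩ] f₁ P := (hf₁sm.mono hm).aestronglyMeasurable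
  have hf₂asm : AEStronglyMeasurable[mΩ] f₂ P := (hf₂sm.mono hm).aestronglyMeasurable
  -- a.e. bounds
  have habs1 : ∀ᵐ ω ∂P, |f₁ ω| ≤ 1 := by
    filter_upwards [hN0'] with ω h
    rw [abs_div]
    rw [abs_of_nonneg h, abs_of_nonneg (by linarith : (0:ℝ) ≤ 1 + N ω)]
    rw [div_le_one (by linarith)]
    linarith
  have habs2 : ∀ᵐ ω ∂P, |f₂ ω| ≤ 1 := by
    filter_upwards [hN0'] with ω h
    have h1 : (0:ℝ) < (1 + N ω)^2 := by positivity
    have h2 : (1:ℝ) ≤ (1 + N ω)^2 := by nlinarith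
    show |1 - 1/(1 + N ω)^2| ≤ 1
    rw [abs_le]
    constructor
    · have : 1/(1 + N ω)^2 ≤ 1 := by rw [div_le_one h1]; exact h2
      linarith
    · have : 0 < 1/(1 + N ω)^2 := by positivity
      linarith
  -- integrability of products
  have hmul : ∀ (f h : Ω → ℝ), AEStronglyMeasurable[mΩ] f P → (∀ᵐ ω ∂P, |f ω| ≤ 1) →
      Integrable h P → Integrable (fun ω => f ω * h ω) P := by
    intro f h hf hb hh
    refine hh.norm.mono' (hf.mul hh.aestronglyMeasurable) ?_
    filter_upwards [hb] with ω hω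
    rw [Real.norm_eq_abs, abs_mul]
    calc |f ω| * |h ω| ≤ 1 * |h ω| := by
          exact mul_le_mul_of_nonneg_right hω (abs_nonneg _)
      _ = ‖h ω‖ := by rw [one_mul, Real.norm_eq_abs]
  have habsgM : ∀ᵐ ω ∂P, |M ω / (1 + M ω)| ≤ 1 := by
    filter_upwards [hM0'] with ω h
    rw [abs_div, abs_of_nonneg h, abs_of_nonneg (by linarith : (0:ℝ) ≤ 1 + M ω),
      div_le_one (by linarith)]
    linarith
  have hgMasm : AEStronglyMeasurable[mΩ] (fun ω => M ω / (1 + M ω)) P :=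
    (hMm.div (aemeasurable_const.add hMm)).aestronglyMeasurable
  have iMgM : Integrable (fun ω => (fun ω => M ω / (1 + M ω)) ω * M ω) P :=
    hmul _ M hgMasm habsgM hMint
  have if₁M : Integrable (fun ω => f₁ ω * M ω) P := hmul f₁ M hf₁asm habs1 hMint
  have if₁N : Integrable (fun ω => f₁ ω * N ω) P := hmul f₁ N hf₁asm habs1 hNint
  have if₂M : Integrable (fun ω => f₂ ω * M ω) P := hmul f₂ M hf₂asm habs2 hMint
  have if₂N : Integrable (fun ω => f₂ ω * N ω) P := hmul f₂ N hf₂asm habs2 hNint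
  -- pull-out property: ∫ f * M = ∫ f * N for m-strongly-measurable f
  have pull : ∀ (f : Ω → ℝ), StronglyMeasurable[m] f →
      Integrable (fun ω => f ω * M ω) P →
      ∫ ω, f ω * M ω ∂P = ∫ ω, f ω * N ω ∂P := by
    intro f hf hfM
    have h1 : P[fun ω => f ω * M ω|m] =ᵐ[P] fun ω => f ω * N ω := by
      have := condExp_mul_of_stronglyMeasurable_left hf hfM hMint
      exact this
    calc ∫ ω, f ω * M ω ∂P = ∫ ω, (P[fun ω => f ω * M ω|m]) ω ∂P :=
          (integral_condExp hm).symm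
      _ = ∫ ω, f ω * N ω ∂P := integral_congr_ae h1
  have P1 : ∫ ω, f₁ ω * M ω ∂P = ∫ ω, f₁ ω * N ω ∂P := pull f₁ hf₁sm if₁M
  have P2 : ∫ ω, f₂ ω * M ω ∂P = ∫ ω, f₂ ω * N ω ∂P := pull f₂ hf₂sm if₂M
  -- the nonnegative gap function
  set H : Ω → ℝ := fun ω => (M ω - N ω)^2 / ((1 + M ω) * (1 + N ω)^2) with hHdef
  have hHeq : H =ᵐ[P] fun ω =>
      M ω * (M ω / (1 + M ω)) - N ω * (N ω / (1 + N ω)) - f₂ ω * M ω + f₂ ω * N ω := by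
    filter_upwards [hM0', hN0'] with ω hMω hNω
    exact gap_eq (M ω) (N ω) hMω hNω
  have iNgN : Integrable (fun ω => N ω * (N ω / (1 + N ω))) P := by
    have := hmul f₁ N hf₁asm habs1 hNint
    refine this.congr ?_
    filter_upwards with ω
    ring
  have iMgMc : Integrable (fun ω => M ω * (M ω / (1 + M ω))) P := by
    refine iMgM.congr ?_
    filter_upwards with ω
    ring
  have hHint : Integrable H P := by
    refine (((iMgMc.sub iNgN).sub if₂M).add if₂N).congr hHeq.symm
  have hH0 : 0 ≤ᵐ[P] H := by
    filter_upwards [hM0', hN0'] with ω hMω hNω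
    simp only [Pi.zero_apply, hHdef]
    positivity
  -- compute ∫ H = 0
  have hMgN : ∫ ω, M ω * f₁ ω ∂P = ∫ ω, M ω * (M ω / (1 + M ω)) ∂P := heq
  have hintH : ∫ ω, H ω ∂P = 0 := by
    rw [integral_congr_ae hHeq]
    have iA : Integrable (fun ω => M ω * (M ω / (1 + M ω)) - N ω * (N ω / (1 + N ω))
        - f₂ ω * M ω) P :=
      ((iMgMc.sub iNgN).sub if₂M).congr (Filter.Eventually.of_forall fun ω => rfl)
    have iB : Integrable (fun ω => M ω * (M ω / (1 + M ω)) - N ω * (N ω / (1 + N ω))) P :=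
      (iMgMc.sub iNgN).congr (Filter.Eventually.of_forall fun ω => rfl)
    rw [integral_add iA if₂N, integral_sub iB if₂M, integral_sub iMgMc iNgN]
    have e1 : ∫ ω, M ω * (M ω / (1 + M ω)) ∂P = ∫ ω, N ω * (N ω / (1 + N ω)) ∂P := by
      rw [← hMgN]
      have : ∫ ω, M ω * f₁ ω ∂P = ∫ ω, f₁ ω * M ω ∂P := by
        congr 1; ext ω; ring
      rw [this, P1]
      congr 1; ext ω; simp only [hf₁def]; ring
    rw [e1, P2]
    ring
  have hH0ae : H =ᵐ[P] 0 := by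
    have := (integral_eq_zero_iff_of_nonneg_ae hH0 hHint).mp hintH
    exact this
  -- conclude
  filter_upwards [hH0ae, hM0', hN0'] with ω hHω hMω hNω
  have hd : (0:ℝ) < (1 + M ω) * (1 + N ω)^2 := by positivity
  have h : (M ω - N ω)^2 / ((1 + M ω) * (1 + N ω)^2) = 0 := by simpa [hHdef] using hHω
  rcases div_eq_zero_iff.mp h with hnum | hden
  · have := pow_eq_zero_iff (n := 2) (by norm_num) |>.mp hnum
    linarith
  · linarith
end

section
/- Let (T, ν) be a probability space, (Y_i) a sequence in L²(ν) such that ∑_{i,j}(∫ Y_i Y_j dν)² < ∞, and set K(t,s) := ∑_i Y_i(t)Y_i(s) (convergent in L²(ν⊗ν)). Suppose furthermore that for even n the 2n-index moment tensor is Hilbert–Schmidt: ∑_{i_1,…,i_n} (∫ Y_{i_1}⋯Y_{i_n} dν)² < ∞. Then ∫∫ K(t,s)ⁿ dν(t) dν(s) ≤ ∑_{i_1,…,i_n} (∫ Y_{i_1}⋯Y_{i_n} dν)² < ∞. -/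
open MeasureTheory Filter Topology

open scoped ENNReal NNReal

theorem aux_prod_memLp {T : Type*} [MeasurableSpace T] (ν : Measure T) [IsProbabilityMeasure ν]
    (Y : ℕ → T → ℝ) (n : ℕ) (hn : n ≠ 0) (hYLn : ∀ i, MemLp (Y i) n ν) :
    ∀ (m : ℕ) (g : Fin m → ℕ), MemLp (fun t => ∏ k, Y (g k) t) ((n : ℝ≥0∞) / m) ν := by
  intro m
  induction m with
  | zero =>
      intro g
      have h1 : ((n : ℝ≥0∞) / ((0:ℕ):ℝ≥0∞)) = ∞ := by
        simp [ENNReal.div_zero (by exact_mod_cast hn : (n:ℝ≥0∞) ≠ 0)]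
      rw [h1]
      have h2 : (fun t => ∏ k : Fin 0, Y (g k) t) = fun _ => (1:ℝ) := by
        funext t; simp
      rw [h2]
      exact memLp_top_const 1
  | succ m ih =>
      intro g
      have hprod : (fun t => ∏ k : Fin (m+1), Y (g k) t)
          = fun t => (Y (g 0) t) • (∏ k : Fin m, Y (g (Fin.succ k)) t) := by
        funext t; rw [Fin.prod_univ_succ]; rfl
      rw [hprod]
      refine MemLp.smul (ih fun k => g (Fin.succ k)) (hYLn (g 0)) (hpqr := ⟨?_⟩)
      have hn0 : (n : ℝ≥0∞) ≠ 0 := by exact_mod_cast hn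
      have hnt : (n : ℝ≥0∞) ≠ ∞ := ENNReal.natCast_ne_top n
      rw [ENNReal.inv_div (Or.inr hnt) (Or.inr hn0),
        ENNReal.inv_div (Or.inr hnt) (Or.inr hn0),
        show (n:ℝ≥0∞)⁻¹ = 1/(n:ℝ≥0∞) from (one_div _).symm, ENNReal.div_add_div_same]
      push_cast
      rw [add_comm]

theorem aux_eq {T : Type*} [MeasurableSpace T] (ν : Measure T) [IsProbabilityMeasure ν]
    (Y : ℕ → T → ℝ) (hYmeas : ∀ i, Measurable (Y i))
    (n : ℕ) (hn : Even n) (hn0 : n ≠ 0) (hYLn : ∀ i, MemLp (Y i) n ν) (N : ℕ) :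
    ∫⁻ p, ENNReal.ofReal ((∑ i ∈ Finset.range N, Y i p.1 * Y i p.2) ^ n) ∂(ν.prod ν)
      = ENNReal.ofReal (∑ g ∈ Fintype.piFinset (fun _ : Fin n => Finset.range N),
          (∫ t, ∏ k, Y (g k) t ∂ν) ^ 2) := by
  have hn0' : (n : ℝ≥0∞) ≠ 0 := by exact_mod_cast hn0
  have hint : ∀ g : Fin n → ℕ, Integrable (fun t => ∏ k, Y (g k) t) ν := by
    intro g
    have := aux_prod_memLp ν Y n hn0 hYLn n g
    rwa [ENNReal.div_self hn0' (ENNReal.natCast_ne_top n), memLp_one_iff_integrable] at this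
  have hexp : ∀ p : T × T, (∑ i ∈ Finset.range N, Y i p.1 * Y i p.2) ^ n
      = ∑ g ∈ Fintype.piFinset (fun _ : Fin n => Finset.range N),
          (∏ k, Y (g k) p.1) * (∏ k, Y (g k) p.2) := by
    intro p
    rw [← Fin.prod_const n (∑ i ∈ Finset.range N, Y i p.1 * Y i p.2),
      Finset.prod_univ_sum]
    exact Finset.sum_congr rfl fun g _ => Finset.prod_mul_distrib
  have hIg : ∀ g : Fin n → ℕ,
      Integrable (fun p : T × T => (∏ k, Y (g k) p.1) * (∏ k, Y (g k) p.2)) (ν.prod ν) :=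
    fun g => (hint g).mul_prod (hint g)
  have hIF : Integrable (fun p : T × T =>
      (∑ i ∈ Finset.range N, Y i p.1 * Y i p.2) ^ n) (ν.prod ν) := by
    simp only [hexp]
    exact integrable_finset_sum _ fun g _ => hIg g
  rw [← ofReal_integral_eq_lintegral_ofReal hIF
    (Eventually.of_forall fun p => hn.pow_nonneg _)]
  congr 1
  calc ∫ p, (∑ i ∈ Finset.range N, Y i p.1 * Y i p.2) ^ n ∂(ν.prod ν)
      = ∑ g ∈ Fintype.piFinset (fun _ : Fin n => Finset.range N),
          ∫ p, (∏ k, Y (g k) p.1) * (∏ k, Y (g k) p.2) ∂(ν.prod ν) := by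
        simp only [hexp]
        exact integral_finset_sum _ fun g _ => hIg g
    _ = ∑ g ∈ Fintype.piFinset (fun _ : Fin n => Finset.range N),
          (∫ t, ∏ k, Y (g k) t ∂ν) ^ 2 := by
        refine Finset.sum_congr rfl fun g _ => ?_
        rw [integral_prod_mul (fun t => ∏ k, Y (g k) t) (fun t => ∏ k, Y (g k) t), sq]

/-- For even n, if the n-index moment tensor of (Yᵢ) is Hilbert–Schmidt, then
∫∫ K(t,s)ⁿ dν dν ≤ ∑_{i₁,…,iₙ} (∫ Y_{i₁}⋯Y_{iₙ} dν)², where K(t,s) = ∑ᵢ Yᵢ(t)Yᵢ(s)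
in L²(ν ⊗ ν). -/
theorem stmt_13 {T : Type*} [MeasurableSpace T] (ν : Measure T) [IsProbabilityMeasure ν]
    (Y : ℕ → T → ℝ) (hYmeas : ∀ i, Measurable (Y i))
    (n : ℕ) (hn : Even n) (hYLn : ∀ i, MemLp (Y i) n ν)
    (hHS2 : Summable fun ij : ℕ × ℕ => (∫ t, Y ij.1 t * Y ij.2 t ∂ν) ^ 2)
    (K : T × T → ℝ)
    (hK : Tendsto (fun N => eLpNorm (fun p : T × T =>
        K p - ∑ i ∈ Finset.range N, Y i p.1 * Y i p.2) 2 (ν.prod ν)) atTop (𝓝 0))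
    (hHSn : Summable fun I : Fin n → ℕ => (∫ t, ∏ k, Y (I k) t ∂ν) ^ 2) :
    ∫⁻ p, ENNReal.ofReal (K p ^ n) ∂(ν.prod ν)
      ≤ ENNReal.ofReal (∑' I : Fin n → ℕ, (∫ t, ∏ k, Y (I k) t ∂ν) ^ 2) := by
  rcases eq_or_ne n 0 with h0 | hn0
  · subst h0
    have hts : (∑' I : Fin 0 → ℕ, (∫ t, ∏ k, Y (I k) t ∂ν) ^ 2) = 1 := by
      rw [tsum_eq_single (fun k => 0) (fun b hb => absurd (Subsingleton.elim b _) hb)]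
      simp
    simp [hts]
  -- notation
  set μ := ν.prod ν with hμ
  set F : ℕ → T × T → ℝ := fun N p => ∑ i ∈ Finset.range N, Y i p.1 * Y i p.2 with hF
  have hFmeas : ∀ N, Measurable (F N) := fun N =>
    Finset.measurable_sum _ fun i _ =>
      ((hYmeas i).comp measurable_fst).mul ((hYmeas i).comp measurable_snd)
  -- even-power identity
  have hpow : ∀ x : ℝ, ENNReal.ofReal (x ^ n) = (‖x‖₊ : ℝ≥0∞) ^ n := by
    intro x
    rw [← hn.pow_abs, ← Real.norm_eq_abs, ENNReal.ofReal_pow (norm_nonneg x),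
      ofReal_norm, enorm_eq_nnnorm]
  -- measurable minorant
  obtain ⟨g, gmeas, gle, hgint⟩ :=
    exists_measurable_le_lintegral_eq (μ := μ) (fun p => ENNReal.ofReal (K p ^ n))
  set g₀ : T × T → ℝ≥0∞ := fun p => g p ^ (1 / (n : ℝ)) with hg₀
  have hnR : (n : ℝ) ≠ 0 := Nat.cast_ne_zero.mpr hn0
  have g₀meas : Measurable g₀ := gmeas.pow_const _
  have hg₀n : ∀ p, g₀ p ^ n = g p := by
    intro p
    rw [hg₀, ← ENNReal.rpow_natCast (g p ^ (1 / (n:ℝ))) n, ← ENNReal.rpow_mul,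
      one_div, inv_mul_cancel₀ hnR, ENNReal.rpow_one]
  have hg₀le : ∀ p, g₀ p ≤ (‖K p‖₊ : ℝ≥0∞) := by
    intro p
    have h1 : g p ≤ (‖K p‖₊ : ℝ≥0∞) ^ n := by rw [← hpow]; exact gle p
    calc g₀ p ≤ ((‖K p‖₊ : ℝ≥0∞) ^ n) ^ (1 / (n:ℝ)) :=
          ENNReal.rpow_le_rpow h1 (by positivity)
      _ = (‖K p‖₊ : ℝ≥0∞) := by
          rw [← ENNReal.rpow_natCast _ n, ← ENNReal.rpow_mul, mul_one_div,
            div_self hnR, ENNReal.rpow_one]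
  -- the defect functions
  set u : ℕ → T × T → ℝ≥0∞ := fun N p => g₀ p - (‖F N p‖₊ : ℝ≥0∞) with hu
  have humeas : ∀ N, Measurable (u N) := fun N =>
    g₀meas.sub (measurable_coe_nnreal_ennreal.comp (hFmeas N).nnnorm)
  have hule : ∀ N p, u N p ≤ (‖K p - F N p‖₊ : ℝ≥0∞) := by
    intro N p
    rw [hu]
    refine tsub_le_iff_right.mpr ((hg₀le p).trans ?_)
    have : ‖K p‖₊ ≤ ‖K p - F N p‖₊ + ‖F N p‖₊ := by
      simpa using nnnorm_add_le (K p - F N p) (F N p)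
    exact_mod_cast this
  -- L² control of u
  have hu2 : ∀ N, ∫⁻ p, (u N p) ^ 2 ∂μ ≤ (eLpNorm (fun p => K p - F N p) 2 μ) ^ 2 := by
    intro N
    have h1 : ∫⁻ p, (u N p) ^ 2 ∂μ ≤ ∫⁻ p, ((‖K p - F N p‖₊ : ℝ≥0∞)) ^ 2 ∂μ :=
      lintegral_mono fun p => pow_le_pow_left₀ (zero_le) (hule N p) 2
    refine h1.trans (le_of_eq ?_)
    rw [eLpNorm_eq_lintegral_rpow_enorm_toReal two_ne_zero ENNReal.ofNat_ne_top, ENNReal.toReal_ofNat,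
      ← ENNReal.rpow_natCast _ 2, ← ENNReal.rpow_mul]
    norm_num
    rfl
  -- tendsto of ∫⁻ u²
  have hT : Tendsto (fun N => ∫⁻ p, (u N p) ^ 2 ∂μ) atTop (𝓝 0) := by
    have h2 : Tendsto (fun N => (eLpNorm (fun p : T × T =>
        K p - ∑ i ∈ Finset.range N, Y i p.1 * Y i p.2) 2 μ) ^ 2) atTop (𝓝 0) := by
      have := ((ENNReal.continuous_pow 2).continuousAt (x := (0:ℝ≥0∞))).tendsto.comp hK
      simpa [Function.comp_def] using this
    exact tendsto_of_tendsto_of_tendsto_of_le_of_le tendsto_const_nhds h2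
      (fun N => zero_le) hu2
  -- choose a subsequence with geometric control
  have hMex : ∀ k : ℕ, ∃ N, ∫⁻ p, (u N p) ^ 2 ∂μ ≤ ((16:ℝ≥0∞))⁻¹ ^ k := by
    intro k
    have hpos : (0:ℝ≥0∞) < 16⁻¹ ^ k :=
      ENNReal.pow_pos (ENNReal.inv_pos.mpr (by norm_num)) k
    exact ((hT.eventually_lt_const hpos).mono fun N hN => hN.le).exists
  choose M hM using hMex
  set S : ℕ → Set (T × T) := fun k => {p | ((2:ℝ≥0∞))⁻¹ ^ k ≤ u (M k) p} with hS
  have hSm : ∀ k, μ (S k) ≤ (4:ℝ≥0∞)⁻¹ ^ k := by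
    intro k
    have h40 : ((4:ℝ≥0∞))⁻¹ ^ k ≠ 0 :=
      (ENNReal.pow_pos (ENNReal.inv_pos.mpr (by norm_num)) k).ne'
    have h4t : ((4:ℝ≥0∞))⁻¹ ^ k ≠ ∞ :=
      ENNReal.pow_ne_top (ENNReal.inv_ne_top.mpr (by norm_num))
    have h24 : (((2:ℝ≥0∞))⁻¹ ^ k) ^ 2 = (4:ℝ≥0∞)⁻¹ ^ k := by
      rw [← pow_mul, mul_comm, pow_mul, ← ENNReal.inv_pow]
      norm_num
    have hsub : S k ⊆ {p | (((2:ℝ≥0∞))⁻¹ ^ k) ^ 2 ≤ (u (M k) p) ^ 2} :=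
      fun p hp => Set.mem_setOf_eq ▸ pow_le_pow_left₀ (zero_le) hp 2
    have hmar := mul_meas_ge_le_lintegral₀ (μ := μ)
      ((humeas (M k)).pow_const 2).aemeasurable ((((2:ℝ≥0∞))⁻¹ ^ k) ^ 2)
    have hm2 : μ (S k) * ((4:ℝ≥0∞))⁻¹ ^ k ≤ ((16:ℝ≥0∞))⁻¹ ^ k := by
      calc μ (S k) * ((4:ℝ≥0∞))⁻¹ ^ k
          ≤ μ {p | (((2:ℝ≥0∞))⁻¹ ^ k) ^ 2 ≤ (u (M k) p) ^ 2} * ((4:ℝ≥0∞))⁻¹ ^ k :=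
            mul_le_mul_left (measure_mono hsub) _
        _ ≤ ((16:ℝ≥0∞))⁻¹ ^ k := by
            rw [mul_comm, ← h24]
            exact hmar.trans (hM k)
    have h164 : ((16:ℝ≥0∞))⁻¹ ^ k / ((4:ℝ≥0∞))⁻¹ ^ k = ((4:ℝ≥0∞))⁻¹ ^ k := by
      have : ((16:ℝ≥0∞))⁻¹ ^ k = ((4:ℝ≥0∞))⁻¹ ^ k * ((4:ℝ≥0∞))⁻¹ ^ k := by
        rw [← mul_pow, ← ENNReal.mul_inv (by norm_num) (by norm_num)]
        norm_num
      rw [this, mul_div_assoc, ENNReal.div_self h40 h4t, mul_one]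
    calc μ (S k) ≤ ((16:ℝ≥0∞))⁻¹ ^ k / ((4:ℝ≥0∞))⁻¹ ^ k :=
          (ENNReal.le_div_iff_mul_le (Or.inl h40) (Or.inl h4t)).mpr hm2
      _ = ((4:ℝ≥0∞))⁻¹ ^ k := h164
  -- Borel--Cantelli
  have hBC : ∀ᵐ p ∂μ, p ∉ limsup S atTop := by
    refine measure_eq_zero_iff_ae_notMem.mp (measure_limsup_atTop_eq_zero ?_)
    refine ne_top_of_le_ne_top ?_ (ENNReal.tsum_le_tsum hSm)
    rw [ENNReal.tsum_geometric]
    refine ENNReal.inv_ne_top.mpr ?_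
    have : ((4:ℝ≥0∞))⁻¹ < 1 := ENNReal.inv_lt_one.mpr (by norm_num)
    simp only [ne_eq, tsub_eq_zero_iff_le, not_le]
    exact this
  -- a.e. convergence of u along the subsequence
  have hconv : ∀ᵐ p ∂μ, Tendsto (fun k => u (M k) p) atTop (𝓝 0) := by
    filter_upwards [hBC] with p hp
    have hev : ∀ᶠ k in atTop, u (M k) p < ((2:ℝ≥0∞))⁻¹ ^ k := by
      have h1 : ∀ᶠ k in atTop, p ∉ S k :=
        not_frequently.mp fun hf => hp (mem_limsup_iff_frequently_mem.mpr hf)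
      filter_upwards [h1] with k hk
      exact not_le.mp hk
    exact tendsto_of_tendsto_of_tendsto_of_le_of_le' tendsto_const_nhds
      (ENNReal.tendsto_pow_atTop_nhds_zero_of_lt_one (ENNReal.inv_lt_one.mpr (by norm_num)))
      (Eventually.of_forall fun k => zero_le) (hev.mono fun k hk => hk.le)
  -- a.e. liminf bound
  have hliminf : ∀ᵐ p ∂μ, g₀ p ^ n
      ≤ atTop.liminf fun k => ((‖F (M k) p‖₊ : ℝ≥0∞)) ^ n := by
    filter_upwards [hconv] with p hp
    have hb : g₀ p ≤ atTop.liminf fun k => (‖F (M k) p‖₊ : ℝ≥0∞) := by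
      refine ENNReal.le_of_forall_pos_le_add fun ε hε _ => ?_
      have hev : ∀ᶠ k in atTop, g₀ p - (ε : ℝ≥0∞) ≤ (‖F (M k) p‖₊ : ℝ≥0∞) := by
        have hε' : (0:ℝ≥0∞) < ε := by exact_mod_cast hε
        filter_upwards [hp.eventually_lt_const hε'] with k hk
        have h1 : g₀ p ≤ u (M k) p + (‖F (M k) p‖₊ : ℝ≥0∞) := le_tsub_add
        refine tsub_le_iff_left.mpr (h1.trans ?_)
        exact add_le_add_left hk.le _
      calc g₀ p ≤ (g₀ p - (ε:ℝ≥0∞)) + ε := le_tsub_add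
        _ ≤ (atTop.liminf fun k => (‖F (M k) p‖₊ : ℝ≥0∞)) + ε :=
            add_le_add_left (Filter.le_liminf_of_le (by isBoundedDefault) hev) _
    have hmono : Monotone (fun x : ℝ≥0∞ => x ^ n) :=
      fun a b h => pow_le_pow_left₀ (zero_le) h n
    have hmap := hmono.map_liminf_of_continuousAt (F := atTop)
      (fun k => (‖F (M k) p‖₊ : ℝ≥0∞)) ((ENNReal.continuous_pow n).continuousAt)
    calc g₀ p ^ n ≤ (atTop.liminf fun k => (‖F (M k) p‖₊ : ℝ≥0∞)) ^ n :=
          pow_le_pow_left₀ (zero_le) hb n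
      _ = atTop.liminf fun k => ((‖F (M k) p‖₊ : ℝ≥0∞)) ^ n := by
          rw [hmap]; rfl
  -- uniform bound on the subsequence integrals
  have hSN : ∀ N, ∫⁻ p, ((‖F N p‖₊ : ℝ≥0∞)) ^ n ∂μ
      ≤ ENNReal.ofReal (∑' I : Fin n → ℕ, (∫ t, ∏ k, Y (I k) t ∂ν) ^ 2) := by
    intro N
    have he : ∫⁻ p, ((‖F N p‖₊ : ℝ≥0∞)) ^ n ∂μ
        = ENNReal.ofReal (∑ g ∈ Fintype.piFinset (fun _ : Fin n => Finset.range N),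
            (∫ t, ∏ k, Y (g k) t ∂ν) ^ 2) := by
      rw [← aux_eq ν Y hYmeas n hn hn0 hYLn N]
      exact lintegral_congr fun p => (hpow (F N p)).symm
    rw [he]
    exact ENNReal.ofReal_le_ofReal (Summable.sum_le_tsum _ (fun I _ => sq_nonneg _) hHSn)
  calc ∫⁻ p, ENNReal.ofReal (K p ^ n) ∂μ = ∫⁻ p, g p ∂μ := hgint
    _ = ∫⁻ p, g₀ p ^ n ∂μ := lintegral_congr fun p => (hg₀n p).symm
    _ ≤ ∫⁻ p, atTop.liminf (fun k => ((‖F (M k) p‖₊ : ℝ≥0∞)) ^ n) ∂μ :=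
        lintegral_mono_ae hliminf
    _ ≤ atTop.liminf fun k => ∫⁻ p, ((‖F (M k) p‖₊ : ℝ≥0∞)) ^ n ∂μ :=
        lintegral_liminf_le fun k =>
          (measurable_coe_nnreal_ennreal.comp (hFmeas (M k)).nnnorm).pow_const n
    _ ≤ ENNReal.ofReal (∑' I : Fin n → ℕ, (∫ t, ∏ k, Y (I k) t ∂ν) ^ 2) :=
        (Filter.liminf_le_liminf (Eventually.of_forall fun k => hSN (M k))).trans_eq
          (Filter.liminf_const (ENNReal.ofReal (∑' I : Fin n → ℕ, (∫ t, ∏ k, Y (I k) t ∂ν) ^ 2)))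
end

section
/- Let (Ω, P) be a probability space, (f_n) and f measurable real-valued functions on Ω with f_n → f in probability, and let (M_m) be a family of random finite measures on a space T with uniformly integrable total masses {M_m[T]}. Suppose F_m : Ω × T → Ω are measurable maps such that the pushforward of P ⊗ μ under (ω,t) ↦ F_m(ω,t) is absolutely continuous with respect to P with density M_m[T] (as happens for shifted Gaussians). Then f_n ∘ F_m → f ∘ F_m in P⊗μ-probability, uniformly in m: sup_m (P⊗μ){|f_n∘F_m − f∘F_m| > ε} → 0 as n → ∞, for every ε > 0. -/
open MeasureTheory Filter Topology

/-- If fₙ → f in P-probability and the maps F_m push P ⊗ μ to a measure absolutely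
continuous w.r.t. P with densities M_m[T] forming a uniformly integrable family,
then fₙ ∘ F_m → f ∘ F_m in P⊗μ-probability uniformly in m. -/
theorem stmt_18 {Ω T ι : Type*} [MeasurableSpace Ω] [MeasurableSpace T]
    (P : Measure Ω) [IsProbabilityMeasure P] (μ : Measure T) [IsProbabilityMeasure μ]
    (f : ℕ → Ω → ℝ) (flim : Ω → ℝ)
    (hfmeas : ∀ n, Measurable (f n)) (hflimmeas : Measurable flim)
    (hconv : TendstoInMeasure P f atTop flim)
    (M : ι → Ω → Measure T)
    (hui : ∀ δ > (0:ℝ), ∃ η > (0:ℝ), ∀ A : Set Ω, MeasurableSet A →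
      P A ≤ ENNReal.ofReal η → ∀ m, ∫⁻ ω in A, M m ω Set.univ ∂P ≤ ENNReal.ofReal δ)
    (F : ι → Ω × T → Ω) (hF : ∀ m, Measurable (F m))
    (hpush : ∀ m (B : Set Ω), MeasurableSet B →
      (P.prod μ) (F m ⁻¹' B) = ∫⁻ ω in B, M m ω Set.univ ∂P) :
    ∀ ε > (0:ℝ),
      Tendsto (fun n => ⨆ m, (P.prod μ) {p | ε < |f n (F m p) - flim (F m p)|})
        atTop (𝓝 0) := by
  intro ε hε
  rw [ENNReal.tendsto_nhds_zero]
  intro δ' hδ'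
  have hmin_ne_top : min 1 δ' ≠ ⊤ := ne_top_of_le_ne_top ENNReal.one_ne_top (min_le_left _ _)
  set δ : ℝ := (min 1 δ').toReal with hδdef
  have hδpos : 0 < δ := ENNReal.toReal_pos (lt_min one_pos hδ').ne' hmin_ne_top
  have hofδ : ENNReal.ofReal δ ≤ δ' := by
    rw [hδdef, ENNReal.ofReal_toReal hmin_ne_top]
    exact min_le_right _ _
  obtain ⟨η, hη, hA⟩ := hui δ hδpos
  have hBmeas : ∀ n, MeasurableSet {ω | ε < |f n ω - flim ω|} := fun n =>
    measurableSet_lt measurable_const ((hfmeas n).sub hflimmeas).abs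
  have hP : Tendsto (fun n => P {ω | ε ≤ |f n ω - flim ω|}) atTop (𝓝 0) := by
    have := tendstoInMeasure_iff_dist.mp hconv ε hε
    simpa [Real.dist_eq] using this
  have hev : ∀ᶠ n in atTop, P {ω | ε ≤ |f n ω - flim ω|} ≤ ENNReal.ofReal η :=
    ENNReal.tendsto_nhds_zero.mp hP _ (ENNReal.ofReal_pos.mpr hη)
  filter_upwards [hev] with n hn'
  have hn : P {ω | ε < |f n ω - flim ω|} ≤ ENNReal.ofReal η :=
    le_trans (measure_mono (fun ω (h : ε < _) => Set.mem_setOf.mpr h.le)) hn'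
  refine le_trans (iSup_le fun m => ?_) hofδ
  have heq : {p : Ω × T | ε < |f n (F m p) - flim (F m p)|}
      = F m ⁻¹' {ω | ε < |f n ω - flim ω|} := rfl
  rw [heq, hpush m _ (hBmeas n)]
  exact hA _ (hBmeas n) hn m
end
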